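/- The packing chromatic number of the cycle C_n equals 3 if n = 3 or n ≡ 0 (mod 4), and equals 4 if n ≥ 5 and n ≡ 1, 2, or 3 (mod 4). -/

import Mathlib

open SimpleGraph

/-- A packing `k`-coloring of a graph: colors in `{1,…,k}`, and distinct vertices
with the same color `i` are at distance greater than `i`. -/
def IsPackingColoring {V : Type*} (G : SimpleGraph V) (k : ℕ) (c : V → ℕ) : Prop :=
  (∀ v, 1 ≤ c v ∧ c v ≤ k) ∧
  ∀ u v : V, u ≠ v → c u = c v → (c u : ℕ∞) < G.edist u v

/-- The packing chromatic number. -/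
noncomputable def packingChromaticNumber {V : Type*} (G : SimpleGraph V) : ℕ :=
  sInf {k | ∃ c, IsPackingColoring G k c}

/-- The generalized corona `G ⊙ pK₁`: add `p` pendant neighbors to each vertex. -/
def genCorona {V : Type*} (G : SimpleGraph V) (p : ℕ) : SimpleGraph (V ⊕ V × Fin p) where
  Adj x y :=
    (∃ u v, x = Sum.inl u ∧ y = Sum.inl v ∧ G.Adj u v) ∨
    (∃ u j, x = Sum.inl u ∧ y = Sum.inr (u, j)) ∨
    (∃ u j, x = Sum.inr (u, j) ∧ y = Sum.inl u)
  symm := by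
    constructor
    rintro x y (⟨u, v, rfl, rfl, h⟩ | ⟨u, j, rfl, rfl⟩ | ⟨u, j, rfl, rfl⟩)
    · exact Or.inl ⟨v, u, rfl, rfl, h.symm⟩
    · exact Or.inr (Or.inr ⟨u, j, rfl, rfl⟩)
    · exact Or.inr (Or.inl ⟨u, j, rfl, rfl⟩)
  loopless := by
    constructor
    rintro x (⟨u, v, rfl, h1, h⟩ | ⟨u, j, rfl, h1⟩ | ⟨u, j, rfl, h1⟩)
    · cases h1; exact G.loopless.irrefl u h
    · exact absurd h1 (by simp)
    · exact absurd h1 (by simp)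

/-- `A` is an orientation of `G`: each edge gets exactly one direction. -/
def IsOrientation {V : Type*} (G : SimpleGraph V) (A : V → V → Prop) : Prop :=
  (∀ u v, A u v → ¬ A v u) ∧ (∀ u v, G.Adj u v ↔ (A u v ∨ A v u))

/-- Existence of a directed path of length `n` from `u` to `v`. -/
def DPath {V : Type*} (A : V → V → Prop) : ℕ → V → V → Prop
  | 0, u, v => u = v
  | (n+1), u, v => ∃ w, A u w ∧ DPath A n w v

/-- The weak directed distance: length of a shortest directed path joining `u` and `v`
in either direction. -/
noncomputable def wdist {V : Type*} (A : V → V → Prop) (u v : V) : ℕ∞ :=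
  sInf {m : ℕ∞ | ∃ n : ℕ, m = n ∧ (DPath A n u v ∨ DPath A n v u)}

/-- A packing `k`-coloring of a digraph, w.r.t. the weak directed distance. -/
def IsDPackingColoring {V : Type*} (A : V → V → Prop) (k : ℕ) (c : V → ℕ) : Prop :=
  (∀ v, 1 ≤ c v ∧ c v ≤ k) ∧
  ∀ u v : V, u ≠ v → c u = c v → (c u : ℕ∞) < wdist A u v

/-- The packing chromatic number of a digraph. -/
noncomputable def dPackingChromaticNumber {V : Type*} (A : V → V → Prop) : ℕ :=
  sInf {k | ∃ c, IsDPackingColoring A k c}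

/-- A source: no incoming arcs. -/
def IsSource {V : Type*} (A : V → V → Prop) (v : V) : Prop := ∀ u, ¬ A u v

/-- A sink: no outgoing arcs. -/
def IsSink {V : Type*} (A : V → V → Prop) (v : V) : Prop := ∀ u, ¬ A v u



section PCCAux
open Fin.NatCast Fin.CommRing
section

lemma sub_val_int {n : ℕ} [NeZero n] (u v : Fin n) :
    ((v - u).val : ℤ) = (v.val : ℤ) - u.val ∨ ((v - u).val : ℤ) = (v.val : ℤ) - u.val + n := by
  have hu := u.isLt; have hv := v.isLt
  have hn : 0 < n := Nat.pos_of_ne_zero (NeZero.ne n)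
  have key : (v - u).val = (n - u.val + v.val) % n := by rw [Fin.sub_def]
  rcases Nat.lt_or_ge (n - u.val + v.val) n with h | h
  · rw [Nat.mod_eq_of_lt h] at key; right; omega
  · rw [Nat.mod_eq_sub_mod h, Nat.mod_eq_of_lt (by omega)] at key; left; omega

lemma walk_step {n : ℕ} [NeZero n] {u v : Fin n} (w : (cycleGraph n).Walk u v) :
    ∃ s : ℤ, s.natAbs ≤ w.length ∧ (n : ℤ) ∣ ((v.val : ℤ) - u.val - s) := by
  induction w with
  | nil => exact ⟨0, by simp, by simp⟩
  | @cons a x b h p ih =>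
    obtain ⟨s, hs, hdvd⟩ := ih
    rw [cycleGraph_adj'] at h
    rcases h with h | h
    · have h2 : (n : ℤ) ∣ ((x.val : ℤ) - a.val + 1) := by
        rcases sub_val_int x a with h3 | h3 <;> rw [h] at h3
        · exact ⟨0, by omega⟩
        · exact ⟨1, by omega⟩
      refine ⟨s - 1, by simp only [Walk.length_cons]; omega, ?_⟩
      have heq : (b.val : ℤ) - a.val - (s - 1)
          = ((b.val : ℤ) - x.val - s) + ((x.val : ℤ) - a.val + 1) := by ring
      rw [heq]; exact dvd_add hdvd h2
    · have h2 : (n : ℤ) ∣ ((x.val : ℤ) - a.val - 1) := by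
        rcases sub_val_int a x with h3 | h3 <;> rw [h] at h3
        · exact ⟨0, by omega⟩
        · exact ⟨-1, by omega⟩
      refine ⟨s + 1, by simp only [Walk.length_cons]; omega, ?_⟩
      have heq : (b.val : ℤ) - a.val - (s + 1)
          = ((b.val : ℤ) - x.val - s) + ((x.val : ℤ) - a.val - 1) := by ring
      rw [heq]; exact dvd_add hdvd h2

lemma edist_lb {n : ℕ} [NeZero n] (u v : Fin n) :
    ((min (v - u).val (n - (v - u).val) : ℕ) : ℕ∞) ≤ (cycleGraph n).edist u v := by
  rw [edist_eq_sInf]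
  refine le_sInf ?_
  rintro b ⟨w, rfl⟩
  simp only [Nat.cast_le]
  by_contra hcon
  push_neg at hcon
  rw [lt_min_iff] at hcon
  obtain ⟨s, hs, hdvd⟩ := walk_step w
  obtain ⟨t, ht⟩ := hdvd
  have hk := sub_val_int u v
  have hkn := (v - u).isLt
  have habs : -(w.length : ℤ) ≤ s ∧ s ≤ w.length := by omega
  -- derive s = k + n * T
  have hT : ∃ T : ℤ, s = ((v - u).val : ℤ) + n * T := by
    rcases hk with hk | hk
    · exact ⟨-t, by rw [hk]; linarith [ht]⟩
    · exact ⟨-t - 1, by rw [hk]; ring_nf; linarith [ht]⟩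
  obtain ⟨T, hTeq⟩ := hT
  have hn : 0 < (n : ℤ) := by exact_mod_cast Nat.pos_of_ne_zero (NeZero.ne n)
  have hk1 : (((v - u).val : ℤ)) < n := by exact_mod_cast hkn
  have hk0 : (0:ℤ) ≤ ((v - u).val : ℤ) := by positivity
  have hc1 : (w.length : ℤ) < ((v - u).val : ℤ) := by exact_mod_cast hcon.1
  have hc2 : (w.length : ℤ) < (n : ℤ) - ((v - u).val : ℤ) := by
    have := hcon.2; omega
  rcases lt_trichotomy T 0 with h | h | h
  · have : (n : ℤ) * T ≤ n * (-1) := by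
      apply mul_le_mul_of_nonneg_left (by omega) (le_of_lt hn)
    linarith [habs.1]
  · subst h
    linarith [habs.2]
  · have : (n : ℤ) * 1 ≤ n * T := by
      apply mul_le_mul_of_nonneg_left (by omega) (le_of_lt hn)
    linarith [habs.2]

lemma edist_ub {n : ℕ} [NeZero n] (hn : 2 ≤ n) (u v : Fin n) :
    (cycleGraph n).edist u v ≤ ((v - u).val : ℕ∞) := by
  obtain ⟨k, hk⟩ : ∃ k, (v - u).val = k := ⟨_, rfl⟩
  rw [hk]
  induction k generalizing v with
  | zero =>
    have : v - u = 0 := Fin.ext (by simp [hk])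
    have : v = u := by rwa [sub_eq_zero] at this
    subst this; simp [edist_self]
  | succ k ih =>
    set x := v - 1 with hx
    have h1v : (1 : Fin n).val = 1 := by
      have : ((1:ℕ) : Fin n).val = 1 := Fin.val_cast_of_lt (by omega)
      simpa using this
    have hxv : (x - u).val = k := by
      have h3 := sub_val_int 1 (v - u)
      have : v - 1 - u = v - u - 1 := by ring
      rw [show x - u = v - u - 1 from this]
      rcases h3 with h3 | h3 <;>
        (rw [hk, h1v] at h3; have := (v - u - 1).isLt; omega)
    have hadj : (cycleGraph n).Adj x v := by
      rw [cycleGraph_adj']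
      right
      have : v - x = 1 := by rw [hx]; ring
      rw [this, h1v]
    have h4 : (cycleGraph n).edist x v ≤ 1 := by
      simpa using edist_le (Walk.cons hadj Walk.nil)
    calc (cycleGraph n).edist u v ≤ (cycleGraph n).edist u x + (cycleGraph n).edist x v :=
          SimpleGraph.edist_triangle
    _ ≤ (k : ℕ∞) + 1 := add_le_add (ih x hxv) h4
    _ = ((k+1 : ℕ) : ℕ∞) := by push_cast; ring


variable {n : ℕ} [NeZero n]

lemma add_cast_add (i : Fin n) (a b : ℕ) :
    i + ((a : ℕ) : Fin n) + ((b : ℕ) : Fin n) = i + (((a + b : ℕ)) : Fin n) := by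
  push_cast; ring

lemma same_color_bound {K : ℕ} {c : Fin n → ℕ}
    (hc : IsPackingColoring (cycleGraph n) K c) (i : Fin n) (k : ℕ)
    (hk0 : 0 < k) (hkn : k < n) (heq : c i = c (i + (k : Fin n))) : c i < k := by
  have hne : i ≠ i + (k : Fin n) := by
    intro h
    have h2 : ((k : Fin n)).val = 0 := by
      have : (k : Fin n) = 0 := by
        have := add_sub_cancel_left i ((k : Fin n))
        rw [← h] at this; rw [← this, sub_self]
      rw [this]; rfl
    rw [Fin.val_cast_of_lt hkn] at h2; omega
  have hlt := hc.2 i _ hne heq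
  have hub := edist_ub (by omega) i (i + (k : Fin n))
  rw [add_sub_cancel_left, Fin.val_cast_of_lt hkn] at hub
  have : (c i : ℕ∞) < (k : ℕ∞) := lt_of_lt_of_le hlt hub
  exact_mod_cast this

lemma no_two (hn : 3 ≤ n) : ¬ ∃ c, IsPackingColoring (cycleGraph n) 2 c := by
  rintro ⟨c, hc⟩
  have hone : ∀ i : Fin n, c i = 1 := by
    intro i
    have b0 := hc.1 i
    have b1 := hc.1 (i + ((1:ℕ) : Fin n))
    have b2 := hc.1 (i + ((2:ℕ) : Fin n))
    have ne01 : c i ≠ c (i + ((1:ℕ) : Fin n)) := fun h => by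
      have := same_color_bound hc i 1 (by omega) (by omega) h; omega
    have hm2 : i + ((2:ℕ) : Fin n) = i + ((1:ℕ) : Fin n) + ((1:ℕ) : Fin n) :=
      (add_cast_add i 1 1).symm
    have ne12 : c (i + ((1:ℕ) : Fin n)) ≠ c (i + ((2:ℕ) : Fin n)) := fun h => by
      rw [hm2] at h
      have := same_color_bound hc (i + ((1:ℕ) : Fin n)) 1 (by omega) (by omega) h; omega
    have h02 : c i = c (i + ((2:ℕ) : Fin n)) := by omega
    have := same_color_bound hc i 2 (by omega) (by omega) h02
    omega
  have h1 := hone 0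
  have h2 := hone (0 + ((1:ℕ) : Fin n))
  have := same_color_bound hc 0 1 (by omega) (by omega) (by rw [h1, h2])
  omega

lemma no_three (hn : 5 ≤ n) (hmod : n % 4 ≠ 0) :
    ¬ ∃ c, IsPackingColoring (cycleGraph n) 3 c := by
  rintro ⟨c, hc⟩
  have gap : ∀ (i : Fin n) (k : ℕ), 0 < k → k ≤ 3 → c i = 3 →
      c (i + ((k:ℕ) : Fin n)) ≠ 3 := by
    intro i k h1 h2 h3 h4
    have := same_color_bound hc i k h1 (by omega) (by rw [h3, h4])
    omega
  have win : ∀ i : Fin n, c i = 3 ∨ c (i + ((1:ℕ) : Fin n)) = 3 ∨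
      c (i + ((2:ℕ) : Fin n)) = 3 ∨ c (i + ((3:ℕ) : Fin n)) = 3 := by
    intro i
    by_contra hcon
    push_neg at hcon
    obtain ⟨q0, q1, q2, q3⟩ := hcon
    have b0 := hc.1 i
    have b1 := hc.1 (i + ((1:ℕ) : Fin n))
    have b2 := hc.1 (i + ((2:ℕ) : Fin n))
    have b3 := hc.1 (i + ((3:ℕ) : Fin n))
    have ne01 : c i ≠ c (i + ((1:ℕ) : Fin n)) := fun h => by
      have := same_color_bound hc i 1 (by omega) (by omega) h; omega
    have hm2 : i + ((2:ℕ) : Fin n) = i + ((1:ℕ) : Fin n) + ((1:ℕ) : Fin n) :=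
      (add_cast_add i 1 1).symm
    have hm3 : i + ((3:ℕ) : Fin n) = i + ((2:ℕ) : Fin n) + ((1:ℕ) : Fin n) :=
      (add_cast_add i 2 1).symm
    have hm3' : i + ((3:ℕ) : Fin n) = i + ((1:ℕ) : Fin n) + ((2:ℕ) : Fin n) :=
      (add_cast_add i 1 2).symm
    have ne12 : c (i + ((1:ℕ) : Fin n)) ≠ c (i + ((2:ℕ) : Fin n)) := fun h => by
      rw [hm2] at h
      have := same_color_bound hc (i + ((1:ℕ) : Fin n)) 1 (by omega) (by omega) h; omega
    have ne23 : c (i + ((2:ℕ) : Fin n)) ≠ c (i + ((3:ℕ) : Fin n)) := fun h => by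
      rw [hm3] at h
      have := same_color_bound hc (i + ((2:ℕ) : Fin n)) 1 (by omega) (by omega) h; omega
    have h02 : c i = c (i + ((2:ℕ) : Fin n)) := by omega
    have e02 := same_color_bound hc i 2 (by omega) (by omega) h02
    have h13 : c (i + ((1:ℕ) : Fin n)) = c (i + ((3:ℕ) : Fin n)) := by omega
    have e13 : c (i + ((1:ℕ) : Fin n)) < 2 := by
      rw [hm3'] at h13
      exact same_color_bound hc (i + ((1:ℕ) : Fin n)) 2 (by omega) (by omega) h13
    omega
  have step4 : ∀ i : Fin n, c i = 3 → c (i + ((4:ℕ) : Fin n)) = 3 := by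
    intro i h
    rcases win (i + ((1:ℕ) : Fin n)) with h1 | h1 | h1 | h1
    · exact absurd h1 (gap i 1 (by omega) (by omega) h)
    · rw [add_cast_add] at h1
      exact absurd h1 (gap i 2 (by omega) (by omega) h)
    · rw [add_cast_add] at h1
      exact absurd h1 (gap i 3 (by omega) (by omega) h)
    · rw [add_cast_add] at h1
      exact h1
  have iter : ∀ (t : ℕ) (i : Fin n), c i = 3 → c (i + ((4*t : ℕ) : Fin n)) = 3 := by
    intro t
    induction t with
    | zero => intro i h; simpa using h
    | succ t ih =>
      intro i h
      have := step4 _ (ih i h)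
      rw [add_cast_add] at this
      have harg : 4 * t + 4 = 4 * (t + 1) := by ring
      rwa [harg] at this
  have base : ∃ i : Fin n, c i = 3 := by
    rcases win 0 with h | h | h | h
    exacts [⟨_, h⟩, ⟨_, h⟩, ⟨_, h⟩, ⟨_, h⟩]
  obtain ⟨i, hi⟩ := base
  -- pick t, m with 4 * t = m * n + (n % 4)
  obtain ⟨t, m, s, hs0, hs3, htm⟩ : ∃ t m s : ℕ, 0 < s ∧ s ≤ 3 ∧ 4 * t = m * n + s := by
    rcases (show n % 4 = 1 ∨ n % 4 = 2 ∨ n % 4 = 3 by omega) with h | h | h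
    · exact ⟨3*(n/4)+1, 3, 1, by omega, by omega, by omega⟩
    · exact ⟨n/4+1, 1, 2, by omega, by omega, by omega⟩
    · exact ⟨n/4+1, 1, 1, by omega, by omega, by omega⟩
  have hcast : ((4 * t : ℕ) : Fin n) = ((s : ℕ) : Fin n) := by
    rw [htm]; push_cast [Fin.natCast_self]; ring
  have h3 := iter t i hi
  rw [hcast] at h3
  exact gap i s hs0 hs3 hi h3
end

def col3 (n : ℕ) (i : Fin n) : ℕ :=
  if i.val % 4 = 1 then 2 else if i.val % 4 = 3 then 3 else 1

def col4 (n : ℕ) (i : Fin n) : ℕ := if i.val = n - 1 then 4 else col3 n i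

section
variable {n : ℕ} [NeZero n]

lemma col3_classify (i : Fin n) :
    (col3 n i = 1 ∧ i.val % 2 = 0) ∨ (col3 n i = 2 ∧ i.val % 4 = 1) ∨
    (col3 n i = 3 ∧ i.val % 4 = 3) := by
  unfold col3
  split_ifs with h1 h2
  · exact Or.inr (Or.inl ⟨rfl, h1⟩)
  · exact Or.inr (Or.inr ⟨rfl, h2⟩)
  · exact Or.inl ⟨rfl, by omega⟩

lemma col4_classify (i : Fin n) :
    (col4 n i = 4 ∧ i.val = n - 1) ∨
    (i.val ≠ n - 1 ∧ ((col4 n i = 1 ∧ i.val % 2 = 0) ∨ (col4 n i = 2 ∧ i.val % 4 = 1) ∨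
      (col4 n i = 3 ∧ i.val % 4 = 3))) := by
  unfold col4
  split_ifs with h1
  · exact Or.inl ⟨rfl, h1⟩
  · exact Or.inr ⟨h1, col3_classify i⟩

lemma key_lt {c : Fin n → ℕ} (u v : Fin n)
    (h : c u < min (v - u).val (n - (v - u).val)) :
    (c u : ℕ∞) < (cycleGraph n).edist u v :=
  lt_of_lt_of_le (by exact_mod_cast h) (edist_lb u v)

lemma pack3 (hn : 3 ≤ n) (h4 : n % 4 = 0) : IsPackingColoring (cycleGraph n) 3 (col3 n) := by
  constructor
  · intro v; unfold col3; split_ifs <;> omega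
  · intro u v hne heq
    refine key_lt u v ?_
    have hk := sub_val_int u v
    have hkn := (v - u).isLt
    have hk0 : (v - u).val ≠ 0 := by
      intro h
      have hvu : v = u := sub_eq_zero.mp (Fin.ext h)
      exact hne hvu.symm
    have hu := u.isLt
    have hv := v.isLt
    have hval : u.val ≠ v.val := fun h => hne (Fin.ext h)
    rcases col3_classify u with ⟨ha, hb⟩ | ⟨ha, hb⟩ | ⟨ha, hb⟩ <;>
      rcases col3_classify v with ⟨ha', hb'⟩ | ⟨ha', hb'⟩ | ⟨ha', hb'⟩ <;>
      rw [ha] <;> rw [ha, ha'] at heq <;> omega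

lemma pack4 (hn : 5 ≤ n) : IsPackingColoring (cycleGraph n) 4 (col4 n) := by
  constructor
  · intro v; unfold col4 col3; split_ifs <;> omega
  · intro u v hne heq
    refine key_lt u v ?_
    have hk := sub_val_int u v
    have hkn := (v - u).isLt
    have hk0 : (v - u).val ≠ 0 := by
      intro h
      have hvu : v = u := sub_eq_zero.mp (Fin.ext h)
      exact hne hvu.symm
    have hu := u.isLt
    have hv := v.isLt
    have hval : u.val ≠ v.val := fun h => hne (Fin.ext h)
    rcases col4_classify u with ⟨ha, hb⟩ | ⟨hb, ⟨ha, hb2⟩ | ⟨ha, hb2⟩ | ⟨ha, hb2⟩⟩ <;>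
      rcases col4_classify v with ⟨ha', hb'⟩ | ⟨hb', ⟨ha', hb2'⟩ | ⟨ha', hb2'⟩ | ⟨ha', hb2'⟩⟩ <;>
      rw [ha] <;> rw [ha, ha'] at heq <;> omega
end

def colId (n : ℕ) (i : Fin n) : ℕ := i.val + 1

lemma packId : IsPackingColoring (cycleGraph 3) 3 (colId 3) := by
  constructor
  · intro v; unfold colId; have := v.isLt; omega
  · intro u v hne heq
    exact absurd (Fin.ext (by unfold colId at heq; omega) : u = v) hne


end PCCAux


lemma pcc_sInf_eq {S : Set ℕ} {m : ℕ} (h1 : m ∈ S) (h2 : ∀ k ∈ S, m ≤ k) : sInf S = m :=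
  le_antisymm (csInf_le (OrderBot.bddBelow S) h1) (le_csInf ⟨m, h1⟩ h2)

theorem packing_chromatic_cycle (n : ℕ) (hn : 3 ≤ n) :
    ((n = 3 ∨ n % 4 = 0) → packingChromaticNumber (cycleGraph n) = 3) ∧
    ((5 ≤ n ∧ n % 4 ≠ 0) → packingChromaticNumber (cycleGraph n) = 4) := by
  haveI : NeZero n := ⟨by omega⟩
  have mono : ∀ k l : ℕ, k ≤ l → (∃ c, IsPackingColoring (cycleGraph n) k c) →
      ∃ c, IsPackingColoring (cycleGraph n) l c := by
    rintro k l hkl ⟨c, hc⟩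
    exact ⟨c, ⟨fun v => ⟨(hc.1 v).1, le_trans (hc.1 v).2 (by exact_mod_cast hkl)⟩, hc.2⟩⟩
  constructor
  · intro h
    have h3S : ∃ c, IsPackingColoring (cycleGraph n) 3 c := by
      rcases h with h | h
      · subst h; exact ⟨colId 3, packId⟩
      · exact ⟨col3 n, pack3 hn h⟩
    show sInf {k | ∃ c, IsPackingColoring (cycleGraph n) k c} = 3
    refine pcc_sInf_eq h3S ?_
    intro k hk
    by_contra hlt
    push_neg at hlt
    exact no_two hn (mono k 2 (by omega) hk)
  · rintro ⟨h5, hm⟩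
    have h4S : ∃ c, IsPackingColoring (cycleGraph n) 4 c := ⟨col4 n, pack4 h5⟩
    show sInf {k | ∃ c, IsPackingColoring (cycleGraph n) k c} = 4
    refine pcc_sInf_eq h4S ?_
    intro k hk
    by_contra hlt
    push_neg at hlt
    exact no_three h5 hm (mono k 3 (by omega) hk)
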